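/- For every decorated planar rooted forest F ∈ ℱ(X,Ω), Δ_λ(F) = Σ λ^{|I∩J|} F_I ⊗ F_J, where the sum runs over all pairs of subsets I, J ⊆ V(F) with I ∪ J = V(F) and I ∩ J ⊆ V_X(F). In particular, for λ = 0, Δ(F) = Σ_{I ⊆ V(F)} F_I ⊗ F_{V(F)∖I}. -/

import Mathlib

open scoped TensorProduct

universe u v w u'

/-- Decorated planar rooted trees: internal vertices are decorated by `Ω`,
leaves are decorated by `X ⊔ Ω` (a leaf decorated by `ω : Ω` is `node ω []`). -/
inductive PTree (X : Type u) (Ω : Type v) : Type (max u v)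
  | leafX : X → PTree X Ω
  | node : Ω → List (PTree X Ω) → PTree X Ω

namespace Moerdijk

variable {X : Type u} {Ω : Type v}

/-- `ℱ(X,Ω)`: decorated planar rooted forests, i.e. the free monoid on decorated
planar rooted trees under concatenation. -/
abbrev RForest (X : Type u) (Ω : Type v) := FreeMonoid (PTree X Ω)

/-- The single-vertex forest `•ₓ` for `x ∈ X`. -/
def leafF (x : X) : RForest X Ω := FreeMonoid.of (PTree.leafX x)

/-- Grafting of a forest onto a new common root decorated by `ω`. -/
def graft (ω : Ω) (F : RForest X Ω) : RForest X Ω :=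
  FreeMonoid.of (PTree.node ω (FreeMonoid.toList F))

variable (k : Type w) [CommRing k]

/-- `H(X,Ω)`: the free `k`-module on decorated planar rooted forests, a unital
associative algebra under the concatenation product. -/
abbrev RAlg (X : Type u) (Ω : Type v) := MonoidAlgebra k (RForest X Ω)

/-- The basis element of `H(X,Ω)` corresponding to a forest `F`. -/
noncomputable def ofF (F : RForest X Ω) : RAlg k X Ω := MonoidAlgebra.of k (RForest X Ω) F

/-- The grafting operator `B⁺_ω : H(X,Ω) → H(X,Ω)` as a linear map. -/
noncomputable def Bplus (ω : Ω) : RAlg k X Ω →ₗ[k] RAlg k X Ω :=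
  MonoidAlgebra.mapDomainLinearMap k k (graft ω)

/-- The value of the coproduct `Δ_λ` on a decorated planar rooted tree:
`Δ_λ(•ₓ) = •ₓ ⊗ 1 + 1 ⊗ •ₓ + λ •ₓ ⊗ •ₓ` and
`Δ_λ(B⁺_ω(F)) = (B⁺_ω ⊗ id)Δ_λ(F) + (id ⊗ B⁺_ω)Δ_λ(F)`. -/
noncomputable def DeltaT (lam : k) : PTree X Ω → (RAlg k X Ω ⊗[k] RAlg k X Ω)
  | .leafX x =>
      ofF k (leafF x) ⊗ₜ[k] 1 + 1 ⊗ₜ[k] ofF k (leafF x)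
        + lam • (ofF k (leafF x) ⊗ₜ[k] ofF k (leafF x))
  | .node ω ts =>
      ((TensorProduct.map (Bplus k ω) LinearMap.id
        + TensorProduct.map LinearMap.id (Bplus k ω) :
          (RAlg k X Ω ⊗[k] RAlg k X Ω) →ₗ[k] (RAlg k X Ω ⊗[k] RAlg k X Ω)))
        ((ts.attach.map fun t => DeltaT lam t.1).prod)
decreasing_by
  have := List.sizeOf_lt_of_mem t.2
  simp only [PTree.node.sizeOf_spec]
  omega

/-- The value of the coproduct `Δ_λ` on a forest: `Δ_λ(T₁⋯Tₘ) = Δ_λ(T₁)⋯Δ_λ(Tₘ)`. -/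
noncomputable def DeltaF (lam : k) (F : RForest X Ω) : RAlg k X Ω ⊗[k] RAlg k X Ω :=
  ((FreeMonoid.toList F).map (DeltaT k lam)).prod

/-- The coproduct `Δ_λ : H(X,Ω) → H(X,Ω) ⊗ H(X,Ω)`. -/
noncomputable def Delta (lam : k) : RAlg k X Ω →ₗ[k] (RAlg k X Ω ⊗[k] RAlg k X Ω) :=
  (Finsupp.lsum k fun F => LinearMap.toSpanSingleton k _ (DeltaF k lam F)) ∘ₗ
    (MonoidAlgebra.coeffLinearEquiv k).toLinearMap

/-- The counit `ε : H(X,Ω) → k`, sending the empty forest to `1` and every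
nonempty forest to `0`. -/
noncomputable def eps : RAlg k X Ω →ₗ[k] k :=
  (Finsupp.lsum k fun F => LinearMap.toSpanSingleton k k
    (if (FreeMonoid.toList F).isEmpty then (1 : k) else 0)) ∘ₗ
    (MonoidAlgebra.coeffLinearEquiv k).toLinearMap

mutual
  /-- The list of subtrees of a tree, rooted at its vertices taken in the total
  order `≤_{h,r}` (preorder: roots first, then subtrees from left to right). -/
  def subT : PTree X Ω → List (PTree X Ω)
    | .leafX x => [.leafX x]
    | .node ω ts => .node ω ts :: subF ts
  /-- The list of subtrees of a forest, rooted at its vertices in the order `≤_{h,r}`. -/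
  def subF : List (PTree X Ω) → List (PTree X Ω)
    | [] => []
    | t :: ts => subT t ++ subF ts
end

/-- The vertices of a forest `F`, listed in the total order `≤_{h,r}`, each vertex
being recorded by the subtree it roots. -/
def vlist (F : RForest X Ω) : List (PTree X Ω) := subF (FreeMonoid.toList F)

/-- The number of vertices of a forest. -/
def numV (F : RForest X Ω) : ℕ := (vlist F).length

/-- The decoration of the root of a tree. -/
def rootDec : PTree X Ω → X ⊕ Ω
  | .leafX x => Sum.inl x
  | .node ω _ => Sum.inr ω

/-- The decoration of the `i`-th vertex (in the order `≤_{h,r}`) of a forest. -/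
def decorV (F : RForest X Ω) (i : Fin (numV F)) : X ⊕ Ω := rootDec ((vlist F).get i)

/-- The number of vertices of the subtree rooted at the `i`-th vertex of `F`. -/
def subSize (F : RForest X Ω) (i : Fin (numV F)) : ℕ := (subT ((vlist F).get i)).length

/-- The order `≤_h` on `V(F)`: `i ≤_h j` iff there is an oriented path from `i` to `j`,
edges being oriented from the roots towards the leaves.  In the preorder indexing, the
descendants of `i` are exactly the indices in `[i, i + subSize F i)`. -/
def leh (F : RForest X Ω) (i j : Fin (numV F)) : Prop :=
  (i : ℕ) ≤ (j : ℕ) ∧ (j : ℕ) < (i : ℕ) + subSize F i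

/-- The (reflexive) relation `≤_r` on `V(F)`: `i ≤_r j` iff `i = j`, or `i` and `j` are
not comparable for `≤_h` and `j` lies more to the right than `i` in the planar
representation of `F`. -/
def ler (F : RForest X Ω) (i j : Fin (numV F)) : Prop :=
  i = j ∨ (¬ leh F i j ∧ ¬ leh F j i ∧ i < j)

instance (F : RForest X Ω) (i j : Fin (numV F)) : Decidable (leh F i j) := by
  unfold leh; infer_instance

/-- The set `V_X(F)` of vertices of `F` decorated by an element of `X`. -/
def VXset (F : RForest X Ω) : Finset (Fin (numV F)) :=
  Finset.univ.filter fun i => (decorV F i).isLeft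

mutual
  /-- Restriction of a tree, whose vertices have preorder indices `off, off + 1, …`,
  to the set of vertices selected by `p`: each kept vertex receives an incoming edge
  from its smallest kept ancestor, if any; otherwise it becomes a root. -/
  def restT (p : ℕ → Bool) : PTree X Ω → ℕ → List (PTree X Ω)
    | .leafX x, off => if p off then [.leafX x] else []
    | .node ω ts, off =>
        if p off then [.node ω (restF p ts (off + 1))] else restF p ts (off + 1)
  /-- Restriction of a forest to the set of vertices selected by `p`. -/
  def restF (p : ℕ → Bool) : List (PTree X Ω) → ℕ → List (PTree X Ω)
    | [], _ => []
    | t :: ts, off => restT p t off ++ restF p ts (off + (subT t).length)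
end

/-- The induced subforest `F_I` of a forest `F` on a subset `I ⊆ V(F)`. -/
def indSub (F : RForest X Ω) (I : Finset (Fin (numV F))) : RForest X Ω :=
  FreeMonoid.ofList
    (restF (fun m => decide (∃ i ∈ I, (i : ℕ) = m)) (FreeMonoid.toList F) 0)


section Aux

lemma subF_cons (t : PTree X Ω) (ts : List (PTree X Ω)) :
    subF (t :: ts) = subT t ++ subF ts := rfl

lemma subT_leaf (x : X) : subT (X := X) (Ω := Ω) (.leafX x) = [.leafX x] := rfl

lemma subT_node (ω : Ω) (ts : List (PTree X Ω)) :
    subT (.node ω ts) = .node ω ts :: subF ts := rfl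

mutual
theorem restT_congr (p q : ℕ → Bool) (t : PTree X Ω) (off : ℕ)
    (h : ∀ j, off ≤ j → j < off + (subT t).length → p j = q j) :
    restT p t off = restT q t off := by
  cases t with
  | leafX x =>
      have h0 : p off = q off := h off le_rfl (by simp [subT_leaf])
      simp [restT, h0]
  | node ω ts =>
      have h0 : p off = q off := h off le_rfl (by simp [subT_node])
      have hrec : restF p ts (off + 1) = restF q ts (off + 1) :=
        restF_congr p q ts (off + 1) (fun j hj1 hj2 => h j (by omega)
          (by simp only [subT_node, List.length_cons]; omega))
      simp [restT, h0, hrec]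
theorem restF_congr (p q : ℕ → Bool) (ts : List (PTree X Ω)) (off : ℕ)
    (h : ∀ j, off ≤ j → j < off + (subF ts).length → p j = q j) :
    restF p ts off = restF q ts off := by
  cases ts with
  | nil => simp [restF]
  | cons t ts =>
      have h1 : restT p t off = restT q t off :=
        restT_congr p q t off (fun j hj1 hj2 => h j hj1
          (by simp only [subF_cons, List.length_append]; omega))
      have h2 : restF p ts (off + (subT t).length) = restF q ts (off + (subT t).length) :=
        restF_congr p q ts _ (fun j hj1 hj2 => h j (by omega)
          (by simp only [subF_cons, List.length_append]; omega))
      simp [restF, h1, h2]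
end

mutual
theorem restT_shift (p : ℕ → Bool) (t : PTree X Ω) (off : ℕ) :
    restT p t off = restT (fun m => p (m + off)) t 0 := by
  cases t with
  | leafX x => simp [restT]
  | node ω ts =>
      have h1 : restF p ts (off + 1) = restF (fun m => p (m + off)) ts 1 := by
        rw [restF_shift p ts (off + 1), restF_shift (fun m => p (m + off)) ts 1]
        apply restF_congr
        intro j _ _
        show p (j + (off + 1)) = p (j + 1 + off)
        congr 1
        omega
      simp [restT, h1]
theorem restF_shift (p : ℕ → Bool) (ts : List (PTree X Ω)) (off : ℕ) :
    restF p ts off = restF (fun m => p (m + off)) ts 0 := by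
  cases ts with
  | nil => simp [restF]
  | cons t ts =>
      have h1 : restT p t off = restT (fun m => p (m + off)) t 0 := restT_shift p t off
      have h2 : restF p ts (off + (subT t).length)
          = restF (fun m => p (m + off)) ts (0 + (subT t).length) := by
        rw [restF_shift p ts (off + (subT t).length),
          restF_shift (fun m => p (m + off)) ts (0 + (subT t).length)]
        apply restF_congr
        intro j _ _
        show p (j + (off + (subT t).length)) = p (j + (0 + (subT t).length) + off)
        congr 1
        omega
      simp [restF, h1, h2]
end

/-- The membership predicate of a finset of positions, as `ℕ → Bool`. -/
def prSet {N : ℕ} (K : Finset (Fin N)) : ℕ → Bool :=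
  fun m => decide (∃ i ∈ K, (i : ℕ) = m)

/-- Combination of a finset of low positions and a finset of high positions. -/
def fcomb {m n N : ℕ} (h : m + n = N) (I₁ : Finset (Fin m)) (I₂ : Finset (Fin n)) :
    Finset (Fin N) :=
  I₁.map (⟨fun i => ⟨(i : ℕ), by omega⟩, fun a b hab => by
      apply Fin.ext; simpa [Fin.ext_iff] using hab⟩ : Fin m ↪ Fin N) ∪
  I₂.map (⟨fun i => ⟨m + (i : ℕ), by omega⟩, fun a b hab => by
      apply Fin.ext; simp only [Fin.mk.injEq] at hab; omega⟩ : Fin n ↪ Fin N)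

lemma mem_fcomb {m n N : ℕ} (h : m + n = N) (I₁ : Finset (Fin m)) (I₂ : Finset (Fin n))
    (kk : Fin N) :
    kk ∈ fcomb h I₁ I₂ ↔ (∃ i ∈ I₁, (i : ℕ) = (kk : ℕ)) ∨ (∃ i ∈ I₂, m + (i : ℕ) = (kk : ℕ)) := by
  simp [fcomb, Fin.ext_iff, Function.Embedding.coeFn_mk]
  exact Iff.rfl

/-- Adding a root (position `0`) to a finset of positions (shifted up by one). -/
def fcons {n N : ℕ} (h : n + 1 = N) (b : Bool) (I : Finset (Fin n)) : Finset (Fin N) :=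
  (if b then {(⟨0, by omega⟩ : Fin N)} else ∅) ∪
  I.map (⟨fun i => ⟨(i : ℕ) + 1, by omega⟩, fun a b hab => by
      apply Fin.ext; simp only [Fin.mk.injEq] at hab; omega⟩ : Fin n ↪ Fin N)

lemma mem_fcons {n N : ℕ} (h : n + 1 = N) (b : Bool) (I : Finset (Fin n)) (kk : Fin N) :
    kk ∈ fcons h b I ↔ (b ∧ (kk : ℕ) = 0) ∨ (∃ i ∈ I, (i : ℕ) + 1 = (kk : ℕ)) := by
  cases b <;> simp [fcons, Fin.ext_iff, eq_comm, Function.Embedding.coeFn_mk] <;> exact Iff.rfl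

end Aux

section Aux2
variable {m n N : ℕ}

lemma mem_fcomb_low (h : m + n = N) (I₁ : Finset (Fin m)) (I₂ : Finset (Fin n))
    {kk : Fin N} (hk : (kk : ℕ) < m) :
    kk ∈ fcomb h I₁ I₂ ↔ (⟨(kk : ℕ), hk⟩ : Fin m) ∈ I₁ := by
  rw [mem_fcomb]
  constructor
  · rintro (⟨i, hi, hiv⟩ | ⟨i, hi, hiv⟩)
    · have : i = ⟨(kk : ℕ), hk⟩ := Fin.ext hiv
      rwa [this] at hi
    · omega
  · intro hi
    exact Or.inl ⟨⟨(kk : ℕ), hk⟩, hi, rfl⟩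

lemma mem_fcomb_high (h : m + n = N) (I₁ : Finset (Fin m)) (I₂ : Finset (Fin n))
    {kk : Fin N} (hk : m ≤ (kk : ℕ)) :
    kk ∈ fcomb h I₁ I₂ ↔ (⟨(kk : ℕ) - m, by omega⟩ : Fin n) ∈ I₂ := by
  rw [mem_fcomb]
  constructor
  · rintro (⟨i, hi, hiv⟩ | ⟨i, hi, hiv⟩)
    · omega
    · have : i = ⟨(kk : ℕ) - m, by omega⟩ := Fin.ext (show (i : ℕ) = (kk : ℕ) - m by omega)
      rwa [this] at hi
  · intro hi
    exact Or.inr ⟨⟨(kk : ℕ) - m, by omega⟩, hi, show m + ((kk : ℕ) - m) = (kk : ℕ) by omega⟩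

lemma mem_fcomb_inl (h : m + n = N) (I₁ : Finset (Fin m)) (I₂ : Finset (Fin n)) (i : Fin m) :
    (⟨(i : ℕ), by omega⟩ : Fin N) ∈ fcomb h I₁ I₂ ↔ i ∈ I₁ := by
  rw [mem_fcomb_low h I₁ I₂ (show ((⟨(i : ℕ), by omega⟩ : Fin N) : ℕ) < m from i.isLt)]

lemma mem_fcomb_inr (h : m + n = N) (I₁ : Finset (Fin m)) (I₂ : Finset (Fin n)) (i : Fin n) :
    (⟨m + (i : ℕ), by omega⟩ : Fin N) ∈ fcomb h I₁ I₂ ↔ i ∈ I₂ := by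
  rw [mem_fcomb_high h I₁ I₂ (show m ≤ ((⟨m + (i : ℕ), by omega⟩ : Fin N) : ℕ)
    from Nat.le_add_right m i)]
  have : (⟨m + (i : ℕ) - m, by omega⟩ : Fin n) = i :=
    Fin.ext (show m + (i : ℕ) - m = (i : ℕ) by omega)
  rw [this]

lemma mem_fcons_zero (h : n + 1 = N) (b : Bool) (I : Finset (Fin n))
    {kk : Fin N} (hk : (kk : ℕ) = 0) :
    kk ∈ fcons h b I ↔ b := by
  rw [mem_fcons]
  simp [hk]

lemma mem_fcons_pos (h : n + 1 = N) (b : Bool) (I : Finset (Fin n))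
    {kk : Fin N} (hk : 0 < (kk : ℕ)) :
    kk ∈ fcons h b I ↔ (⟨(kk : ℕ) - 1, by omega⟩ : Fin n) ∈ I := by
  rw [mem_fcons]
  constructor
  · rintro (⟨hb, hv⟩ | ⟨i, hi, hiv⟩)
    · omega
    · have : i = ⟨(kk : ℕ) - 1, by omega⟩ := Fin.ext (show (i : ℕ) = (kk : ℕ) - 1 by omega)
      rwa [this] at hi
  · intro hi
    exact Or.inr ⟨⟨(kk : ℕ) - 1, by omega⟩, hi, show ((kk : ℕ) - 1) + 1 = (kk : ℕ) by omega⟩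

lemma mem_fcons_root (h : n + 1 = N) (b : Bool) (I : Finset (Fin n)) :
    (⟨0, by omega⟩ : Fin N) ∈ fcons h b I ↔ b :=
  mem_fcons_zero h b I rfl

lemma mem_fcons_inr (h : n + 1 = N) (b : Bool) (I : Finset (Fin n)) (i : Fin n) :
    (⟨(i : ℕ) + 1, by omega⟩ : Fin N) ∈ fcons h b I ↔ i ∈ I := by
  rw [mem_fcons_pos h b I (show 0 < ((⟨(i : ℕ) + 1, by omega⟩ : Fin N) : ℕ)
    from Nat.succ_pos _)]
  have : (⟨(i : ℕ) + 1 - 1, by omega⟩ : Fin n) = i :=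
    Fin.ext (show (i : ℕ) + 1 - 1 = (i : ℕ) by omega)
  rw [this]

lemma sum_fcomb {M : Type u'} [AddCommMonoid M] (h : m + n = N) (f : Finset (Fin N) → M) :
    ∑ K : Finset (Fin N), f K
      = ∑ I₁ : Finset (Fin m), ∑ I₂ : Finset (Fin n), f (fcomb h I₁ I₂) := by
  have e1 : ∑ p : Finset (Fin m) × Finset (Fin n), f (fcomb h p.1 p.2)
      = ∑ I₁ : Finset (Fin m), ∑ I₂ : Finset (Fin n), f (fcomb h I₁ I₂) :=
    Fintype.sum_prod_type _
  rw [← e1]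
  refine (Fintype.sum_bijective
    (fun p : Finset (Fin m) × Finset (Fin n) => fcomb h p.1 p.2) ⟨?_, ?_⟩ _ _
    (fun p => rfl)).symm
  · intro p q hpq
    have hpq' : fcomb h p.1 p.2 = fcomb h q.1 q.2 := hpq
    have h1 : p.1 = q.1 := by
      ext i
      rw [← mem_fcomb_inl h p.1 p.2 i, ← mem_fcomb_inl h q.1 q.2 i, hpq']
    have h2 : p.2 = q.2 := by
      ext i
      rw [← mem_fcomb_inr h p.1 p.2 i, ← mem_fcomb_inr h q.1 q.2 i, hpq']
    exact Prod.ext h1 h2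
  · intro K
    refine ⟨⟨Finset.univ.filter (fun i : Fin m => (⟨(i : ℕ), by omega⟩ : Fin N) ∈ K),
            Finset.univ.filter (fun i : Fin n => (⟨m + (i : ℕ), by omega⟩ : Fin N) ∈ K)⟩, ?_⟩
    ext kk
    by_cases hk : (kk : ℕ) < m
    · rw [mem_fcomb_low h _ _ hk, Finset.mem_filter]
      simp only [Finset.mem_univ, true_and, Fin.eta]
    · rw [mem_fcomb_high h _ _ (by omega), Finset.mem_filter]
      simp only [Finset.mem_univ, true_and]
      have : (⟨m + ((⟨(kk : ℕ) - m, by omega⟩ : Fin n) : ℕ), by omega⟩ : Fin N) = kk :=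
        Fin.ext (show m + ((kk : ℕ) - m) = (kk : ℕ) by omega)
      rw [this]

lemma sum_fcons {M : Type u'} [AddCommMonoid M] (h : n + 1 = N) (f : Finset (Fin N) → M) :
    ∑ K : Finset (Fin N), f K
      = ∑ I : Finset (Fin n), (f (fcons h true I) + f (fcons h false I)) := by
  have e1 : (∑ I : Finset (Fin n), (f (fcons h true I) + f (fcons h false I)))
      = ∑ p : Finset (Fin n) × Bool, f (fcons h p.2 p.1) := by
    rw [Fintype.sum_prod_type]
    exact Finset.sum_congr rfl fun I _ =>
      (Fintype.sum_bool (fun b : Bool => f (fcons h b I))).symm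
  rw [e1]
  refine (Fintype.sum_bijective
    (fun p : Finset (Fin n) × Bool => fcons h p.2 p.1) ⟨?_, ?_⟩ _ _ (fun p => rfl)).symm
  · intro p q hpq
    have hpq' : fcons h p.2 p.1 = fcons h q.2 q.1 := hpq
    have h1 : p.1 = q.1 := by
      ext i
      rw [← mem_fcons_inr h p.2 p.1 i, ← mem_fcons_inr h q.2 q.1 i, hpq']
    have h2 : p.2 = q.2 := by
      have e2 := congrArg (fun K => (⟨0, by omega⟩ : Fin N) ∈ K) hpq'
      simp only [eq_iff_iff, mem_fcons_root h] at e2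
      cases hp : p.2 <;> cases hq : q.2 <;> simp [hp, hq] at e2 ⊢
    exact Prod.ext h1 h2
  · intro K
    refine ⟨⟨Finset.univ.filter (fun i : Fin n => (⟨(i : ℕ) + 1, by omega⟩ : Fin N) ∈ K),
            decide ((⟨0, by omega⟩ : Fin N) ∈ K)⟩, ?_⟩
    ext kk
    by_cases hk : (kk : ℕ) = 0
    · rw [mem_fcons_zero h _ _ hk]
      have : kk = (⟨0, by omega⟩ : Fin N) := Fin.ext hk
      rw [this]
      simp
    · rw [mem_fcons_pos h _ _ (by omega), Finset.mem_filter]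
      simp only [Finset.mem_univ, true_and]
      have : (⟨((⟨(kk : ℕ) - 1, by omega⟩ : Fin n) : ℕ) + 1, by omega⟩ : Fin N) = kk :=
        Fin.ext (show ((kk : ℕ) - 1) + 1 = (kk : ℕ) by omega)
      rw [this]

lemma fcomb_inter (h : m + n = N) (I₁ J₁ : Finset (Fin m)) (I₂ J₂ : Finset (Fin n)) :
    fcomb h I₁ I₂ ∩ fcomb h J₁ J₂ = fcomb h (I₁ ∩ J₁) (I₂ ∩ J₂) := by
  ext kk
  by_cases hk : (kk : ℕ) < m
  · simp [Finset.mem_inter, mem_fcomb_low h _ _ hk]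
  · simp [Finset.mem_inter, mem_fcomb_high h _ _ (by omega : m ≤ (kk : ℕ))]

lemma fcons_inter (h : n + 1 = N) (b c : Bool) (I J : Finset (Fin n)) :
    fcons h b I ∩ fcons h c J = fcons h (b && c) (I ∩ J) := by
  ext kk
  by_cases hk : (kk : ℕ) = 0
  · simp [Finset.mem_inter, mem_fcons_zero h _ _ hk]
  · simp [Finset.mem_inter, mem_fcons_pos h _ _ (by omega : 0 < (kk : ℕ))]

lemma fcomb_card (h : m + n = N) (I₁ : Finset (Fin m)) (I₂ : Finset (Fin n)) :
    (fcomb h I₁ I₂).card = I₁.card + I₂.card := by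
  rw [fcomb, Finset.card_union_of_disjoint, Finset.card_map, Finset.card_map]
  rw [Finset.disjoint_left]
  rintro kk hk1 hk2
  simp only [Finset.mem_map, Function.Embedding.coeFn_mk] at hk1 hk2
  obtain ⟨i, _, hi⟩ := hk1
  obtain ⟨j, _, hj⟩ := hk2
  rw [← hj] at hi
  have hi' : (i : ℕ) = m + (j : ℕ) := congrArg Fin.val hi
  omega

lemma fcons_card (h : n + 1 = N) (b : Bool) (I : Finset (Fin n)) :
    (fcons h b I).card = I.card + (if b then 1 else 0) := by
  rw [fcons, Finset.card_union_of_disjoint, Finset.card_map]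
  · cases b <;> simp [add_comm]
  · rw [Finset.disjoint_left]
    rintro kk hk1 hk2
    simp only [Finset.mem_map, Function.Embedding.coeFn_mk] at hk2
    obtain ⟨j, _, hj⟩ := hk2
    cases b <;> simp_all [Fin.ext_iff]

lemma fcomb_univ (h : m + n = N) (I₁ J₁ : Finset (Fin m)) (I₂ J₂ : Finset (Fin n)) :
    (∀ kk : Fin N, kk ∈ fcomb h I₁ I₂ ∨ kk ∈ fcomb h J₁ J₂)
      ↔ (∀ i : Fin m, i ∈ I₁ ∨ i ∈ J₁) ∧ (∀ i : Fin n, i ∈ I₂ ∨ i ∈ J₂) := by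
  constructor
  · intro hall
    constructor
    · intro i
      have := hall ⟨(i : ℕ), by omega⟩
      rwa [mem_fcomb_inl h I₁ I₂ i, mem_fcomb_inl h J₁ J₂ i] at this
    · intro i
      have := hall ⟨m + (i : ℕ), by omega⟩
      rwa [mem_fcomb_inr h I₁ I₂ i, mem_fcomb_inr h J₁ J₂ i] at this
  · rintro ⟨h1, h2⟩ kk
    by_cases hk : (kk : ℕ) < m
    · rw [mem_fcomb_low h _ _ hk, mem_fcomb_low h _ _ hk]
      exact h1 _
    · rw [mem_fcomb_high h _ _ (by omega), mem_fcomb_high h _ _ (by omega : m ≤ (kk : ℕ))]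
      exact h2 _

lemma fcons_univ (h : n + 1 = N) (b c : Bool) (I J : Finset (Fin n)) :
    (∀ kk : Fin N, kk ∈ fcons h b I ∨ kk ∈ fcons h c J)
      ↔ ((b ∨ c) ∧ ∀ i : Fin n, i ∈ I ∨ i ∈ J) := by
  constructor
  · intro hall
    constructor
    · have := hall ⟨0, by omega⟩
      rwa [mem_fcons_root h, mem_fcons_root h] at this
    · intro i
      have := hall ⟨(i : ℕ) + 1, by omega⟩
      rwa [mem_fcons_inr h b I i, mem_fcons_inr h c J i] at this
  · rintro ⟨h1, h2⟩ kk
    by_cases hk : (kk : ℕ) = 0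
    · rw [mem_fcons_zero h _ _ hk, mem_fcons_zero h _ _ hk]
      cases b <;> cases c <;> simp_all
    · rw [mem_fcons_pos h _ _ (by omega), mem_fcons_pos h _ _ (by omega : 0 < (kk : ℕ))]
      exact h2 _

lemma prSet_eq {N : ℕ} (K : Finset (Fin N)) (j : ℕ) (hj : j < N) :
    prSet K j = decide ((⟨j, hj⟩ : Fin N) ∈ K) := by
  unfold prSet
  apply decide_eq_decide.mpr
  constructor
  · rintro ⟨i, hi, hiv⟩
    have : (⟨j, hj⟩ : Fin N) = i := Fin.ext hiv.symm
    rwa [this]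
  · intro hK
    exact ⟨_, hK, rfl⟩

lemma prSet_eq_false {N : ℕ} (K : Finset (Fin N)) (j : ℕ) (hj : N ≤ j) :
    prSet K j = false := by
  unfold prSet
  simp only [decide_eq_false_iff_not]
  rintro ⟨i, _, hiv⟩
  have := i.isLt
  omega

lemma prSet_fcomb_low (h : m + n = N) (I₁ : Finset (Fin m)) (I₂ : Finset (Fin n))
    {j : ℕ} (hj : j < m) :
    prSet (fcomb h I₁ I₂) j = prSet I₁ j := by
  rw [prSet_eq _ j (by omega), prSet_eq _ j hj]
  apply decide_eq_decide.mpr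
  rw [mem_fcomb_low h I₁ I₂ (show ((⟨j, by omega⟩ : Fin N) : ℕ) < m from hj)]

lemma prSet_fcomb_high (h : m + n = N) (I₁ : Finset (Fin m)) (I₂ : Finset (Fin n))
    {j : ℕ} (hj : m ≤ j) :
    prSet (fcomb h I₁ I₂) j = prSet I₂ (j - m) := by
  by_cases hjN : j < N
  · rw [prSet_eq _ j hjN, prSet_eq _ (j - m) (by omega)]
    apply decide_eq_decide.mpr
    rw [mem_fcomb_high h I₁ I₂ (show m ≤ ((⟨j, hjN⟩ : Fin N) : ℕ) from hj)]
  · rw [prSet_eq_false _ j (by omega), prSet_eq_false _ (j - m) (by omega)]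

lemma prSet_fcons_zero (h : n + 1 = N) (b : Bool) (I : Finset (Fin n)) :
    prSet (fcons h b I) 0 = b := by
  rw [prSet_eq _ 0 (by omega)]
  have e2 : ((⟨0, by omega⟩ : Fin N) ∈ fcons h b I) = (b = true) := by
    rw [mem_fcons_root h]
  rw [show (decide ((⟨0, by omega⟩ : Fin N) ∈ fcons h b I)) = decide (b = true) by
    congr 1]
  cases b <;> simp

lemma prSet_fcons_succ (h : n + 1 = N) (b : Bool) (I : Finset (Fin n)) (j : ℕ) :
    prSet (fcons h b I) (j + 1) = prSet I j := by
  by_cases hjN : j + 1 < N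
  · rw [prSet_eq _ (j + 1) hjN, prSet_eq _ j (by omega)]
    apply decide_eq_decide.mpr
    rw [mem_fcons_pos h b I (show 0 < ((⟨j + 1, hjN⟩ : Fin N) : ℕ) from Nat.succ_pos j)]
    have : (⟨((⟨j + 1, hjN⟩ : Fin N) : ℕ) - 1, by omega⟩ : Fin n) = ⟨j, by omega⟩ :=
      Fin.ext (show (j + 1) - 1 = j by omega)
    rw [this]
  · rw [prSet_eq_false _ (j + 1) (by omega), prSet_eq_false _ j (by omega)]

end Aux2



section Aux3

variable {k}

/-- Restriction of a forest along combined index sets splits as a concatenation. -/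
lemma restF_fcomb {N : ℕ} (t : PTree X Ω) (ts : List (PTree X Ω))
    (h : (subT t).length + (subF ts).length = N)
    (I₁ : Finset (Fin (subT t).length)) (I₂ : Finset (Fin (subF ts).length)) :
    restF (prSet (fcomb h I₁ I₂)) (t :: ts) 0
      = restT (prSet I₁) t 0 ++ restF (prSet I₂) ts 0 := by
  show restT _ t 0 ++ restF _ ts (0 + (subT t).length) = _
  congr 1
  · exact restT_congr _ _ t 0 (fun j h1 h2 => prSet_fcomb_low h I₁ I₂ (by omega))
  · rw [restF_shift]
    refine restF_congr _ _ ts 0 fun j h1 h2 => ?_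
    show prSet (fcomb h I₁ I₂) (j + (0 + (subT t).length)) = prSet I₂ j
    rw [prSet_fcomb_high h I₁ I₂ (by omega)]
    congr 1
    omega

lemma restT_fcons {N : ℕ} (ω : Ω) (ss : List (PTree X Ω))
    (h : (subF ss).length + 1 = N) (b : Bool) (I : Finset (Fin (subF ss).length)) :
    restT (prSet (fcons h b I)) (.node ω ss) 0
      = if b then [PTree.node ω (restF (prSet I) ss 0)] else restF (prSet I) ss 0 := by
  have e1 : restF (prSet (fcons h b I)) ss (0 + 1) = restF (prSet I) ss 0 := by
    rw [restF_shift]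
    refine restF_congr _ _ ss 0 fun j h1 h2 => ?_
    show prSet (fcons h b I) (j + (0 + 1)) = prSet I j
    exact prSet_fcons_succ h b I j
  show (if prSet (fcons h b I) 0 then [PTree.node ω (restF (prSet (fcons h b I)) ss (0 + 1))]
      else restF (prSet (fcons h b I)) ss (0 + 1)) = _
  rw [prSet_fcons_zero h, e1]

lemma forall_mem_fcomb {m n N : ℕ} (h : m + n = N) (K₁ : Finset (Fin m))
    (K₂ : Finset (Fin n)) (P : Fin N → Prop) :
    (∀ kk ∈ fcomb h K₁ K₂, P kk)
      ↔ (∀ i ∈ K₁, P ⟨(i : ℕ), by omega⟩) ∧ (∀ i ∈ K₂, P ⟨m + (i : ℕ), by omega⟩) := by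
  constructor
  · intro hall
    exact ⟨fun i hi => hall _ ((mem_fcomb_inl h K₁ K₂ i).mpr hi),
           fun i hi => hall _ ((mem_fcomb_inr h K₁ K₂ i).mpr hi)⟩
  · rintro ⟨h1, h2⟩ kk hkk
    by_cases hk : (kk : ℕ) < m
    · rw [mem_fcomb_low h _ _ hk] at hkk
      have := h1 _ hkk
      have e : (⟨((⟨(kk : ℕ), hk⟩ : Fin m) : ℕ), by omega⟩ : Fin N) = kk := Fin.ext rfl
      rwa [e] at this
    · rw [mem_fcomb_high h _ _ (by omega)] at hkk
      have := h2 _ hkk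
      have e : (⟨m + ((⟨(kk : ℕ) - m, by omega⟩ : Fin n) : ℕ), by omega⟩ : Fin N) = kk :=
        Fin.ext (show m + ((kk : ℕ) - m) = (kk : ℕ) by omega)
      rwa [e] at this

lemma forall_mem_fcons {n N : ℕ} (h : n + 1 = N) (b : Bool) (K : Finset (Fin n))
    (P : Fin N → Prop) :
    (∀ kk ∈ fcons h b K, P kk)
      ↔ ((b = true) → P ⟨0, by omega⟩) ∧ (∀ i ∈ K, P ⟨(i : ℕ) + 1, by omega⟩) := by
  constructor
  · intro hall
    exact ⟨fun hb => hall _ ((mem_fcons_root h b K).mpr hb),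
           fun i hi => hall _ ((mem_fcons_inr h b K i).mpr hi)⟩
  · rintro ⟨h1, h2⟩ kk hkk
    by_cases hk : (kk : ℕ) = 0
    · rw [mem_fcons_zero h _ _ hk] at hkk
      have := h1 hkk
      have e : (⟨0, by omega⟩ : Fin N) = kk := Fin.ext hk.symm
      rwa [e] at this
    · rw [mem_fcons_pos h _ _ (by omega)] at hkk
      have := h2 _ hkk
      have e : (⟨((⟨(kk : ℕ) - 1, by omega⟩ : Fin n) : ℕ) + 1, by omega⟩ : Fin N) = kk :=
        Fin.ext (show ((kk : ℕ) - 1) + 1 = (kk : ℕ) by omega)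
      rwa [e] at this

variable (k)

lemma ofF_mul (F G : RForest X Ω) : ofF k (F * G) = ofF k F * ofF k G :=
  map_mul (MonoidAlgebra.of k (RForest X Ω)) F G

lemma ofF_one : ofF k (1 : RForest X Ω) = 1 :=
  map_one (MonoidAlgebra.of k (RForest X Ω))

lemma Bplus_ofF (ω : Ω) (G : RForest X Ω) :
    Bplus k ω (ofF k G) = ofF k (graft ω G) := by
  unfold Bplus ofF
  rw [MonoidAlgebra.of_apply, MonoidAlgebra.of_apply]
  exact MonoidAlgebra.mapDomainLinearMap_single _ _ _

/-- The combinatorial sum associated to a forest. -/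
noncomputable def SF (lam : k) (ts : List (PTree X Ω)) : RAlg k X Ω ⊗[k] RAlg k X Ω :=
  ∑ I : Finset (Fin (subF ts).length), ∑ J : Finset (Fin (subF ts).length),
    if (∀ i, i ∈ I ∨ i ∈ J) ∧ (∀ i, i ∈ I → i ∈ J → (rootDec ((subF ts).get i)).isLeft) then
      lam ^ (I ∩ J).card •
        (ofF k (FreeMonoid.ofList (restF (prSet I) ts 0)) ⊗ₜ[k]
         ofF k (FreeMonoid.ofList (restF (prSet J) ts 0)))
    else 0

/-- The combinatorial sum associated to a tree. -/
noncomputable def ST (lam : k) (t : PTree X Ω) : RAlg k X Ω ⊗[k] RAlg k X Ω :=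
  ∑ I : Finset (Fin (subT t).length), ∑ J : Finset (Fin (subT t).length),
    if (∀ i, i ∈ I ∨ i ∈ J) ∧ (∀ i, i ∈ I → i ∈ J → (rootDec ((subT t).get i)).isLeft) then
      lam ^ (I ∩ J).card •
        (ofF k (FreeMonoid.ofList (restT (prSet I) t 0)) ⊗ₜ[k]
         ofF k (FreeMonoid.ofList (restT (prSet J) t 0)))
    else 0

end Aux3


section Aux4

lemma forall_inter {α : Type u'} [DecidableEq α] (A B : Finset α) (P : α → Prop) :
    (∀ x, x ∈ A → x ∈ B → P x) ↔ ∀ x ∈ A ∩ B, P x := by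
  simp [Finset.mem_inter, and_imp]

lemma get_append_low {α : Type u'} (l₁ l₂ : List α) (j : ℕ) (hj : j < l₁.length)
    (hN : j < (l₁ ++ l₂).length) :
    (l₁ ++ l₂).get ⟨j, hN⟩ = l₁.get ⟨j, hj⟩ := by
  simp [List.getElem_append_left, hj]

lemma get_append_high {α : Type u'} (l₁ l₂ : List α) (j : ℕ) (hj : l₁.length ≤ j)
    (hN : j < (l₁ ++ l₂).length) :
    (l₁ ++ l₂).get ⟨j, hN⟩
      = l₂.get ⟨j - l₁.length, by simp only [List.length_append] at hN; omega⟩ := by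
  simp [List.getElem_append_right, hj]

lemma ite_smul_add {P : Prop} [Decidable P] (c : k) (u v : RAlg k X Ω ⊗[k] RAlg k X Ω) :
    (if P then c • (u + v) else 0) = (if P then c • u else 0) + (if P then c • v else 0) := by
  split <;> simp [smul_add]

lemma sum_finset_fin_zero {M : Type u'} [AddCommMonoid M] {N : ℕ} (hN : N = 0)
    (f : Finset (Fin N) → M) : (∑ K : Finset (Fin N), f K) = f ∅ := by
  subst hN
  exact Fintype.sum_eq_single ∅ (fun K hK =>
    absurd (Finset.eq_empty_of_forall_notMem fun x _ => x.elim0) hK)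

lemma SF_nil (lam : k) : SF k lam ([] : List (PTree X Ω)) = 1 := by
  unfold SF
  rw [sum_finset_fin_zero (show (subF ([] : List (PTree X Ω))).length = 0 from rfl),
    sum_finset_fin_zero (show (subF ([] : List (PTree X Ω))).length = 0 from rfl)]
  rw [if_pos (⟨fun i => absurd i.isLt (Nat.not_lt_zero _),
    fun i _ _ => absurd i.isLt (Nat.not_lt_zero _)⟩ : _ ∧ _)]
  rw [show restF (prSet (∅ : Finset (Fin (subF ([] : List (PTree X Ω))).length))) [] 0
      = [] from rfl]
  rw [show ((∅ : Finset (Fin (subF ([] : List (PTree X Ω))).length)) ∩ ∅).card = 0 by simp]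
  rw [pow_zero, one_smul,
    show FreeMonoid.ofList ([] : List (PTree X Ω)) = 1 from rfl, ofF_one,
    Algebra.TensorProduct.one_def]

lemma SF_cons (lam : k) (t : PTree X Ω) (ts : List (PTree X Ω)) :
    SF k lam (t :: ts) = ST k lam t * SF k lam ts := by
  have hlen : (subT t).length + (subF ts).length = (subF (t :: ts)).length := by
    rw [subF_cons, List.length_append]
  have hgetL : ∀ (i : Fin (subT t).length) hh,
      ((subF (t :: ts)).get ⟨(i : ℕ), hh⟩) = (subT t).get i := fun i hh => by
    have := get_append_low (subT t) (subF ts) (i : ℕ) i.isLt hh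
    exact this
  have hgetR : ∀ (i : Fin (subF ts).length) hh,
      ((subF (t :: ts)).get ⟨(subT t).length + (i : ℕ), hh⟩) = (subF ts).get i := fun i hh => by
    show (subT t ++ subF ts).get ⟨(subT t).length + (i : ℕ), hh⟩ = (subF ts).get i
    rw [get_append_high (subT t) (subF ts) ((subT t).length + (i : ℕ))
      (Nat.le_add_right _ _) hh]
    congr 1
    exact Fin.ext (show (subT t).length + (i : ℕ) - (subT t).length = (i : ℕ) by omega)
  unfold SF ST
  rw [sum_fcomb hlen, Finset.sum_mul_sum]
  refine Finset.sum_congr rfl fun I₁ _ => ?_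
  refine Finset.sum_congr rfl fun I₂ _ => ?_
  rw [sum_fcomb hlen, Finset.sum_mul_sum]
  refine Finset.sum_congr rfl fun J₁ _ => Finset.sum_congr rfl fun J₂ _ => ?_
  rw [ite_zero_mul_ite_zero]
  refine if_congr ?_ ?_ rfl
  · simp only [forall_inter]
    rw [fcomb_inter, fcomb_univ]
    rw [forall_mem_fcomb]
    simp only [hgetL, hgetR]
    simp only [Finset.mem_inter]
    tauto
  · rw [restF_fcomb t ts hlen I₁ I₂, restF_fcomb t ts hlen J₁ J₂, fcomb_inter, fcomb_card,
      FreeMonoid.ofList_append, FreeMonoid.ofList_append, ofF_mul, ofF_mul, pow_add,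
      smul_mul_smul_comm, Algebra.TensorProduct.tmul_mul_tmul]

lemma graft_ofList (ω : Ω) (R : List (PTree X Ω)) :
    graft ω (FreeMonoid.ofList R) = FreeMonoid.ofList [PTree.node ω R] := rfl

lemma rootDec_node_not_left (ω : Ω) (ss : List (PTree X Ω)) :
    (rootDec (PTree.node ω ss : PTree X Ω)).isLeft = false := rfl

lemma ST_leaf (lam : k) (x : X) :
    ST k lam (PTree.leafX x : PTree X Ω)
      = ofF k (leafF x) ⊗ₜ[k] 1 + 1 ⊗ₜ[k] ofF k (leafF x)
        + lam • (ofF k (leafF x) ⊗ₜ[k] ofF k (leafF x)) := by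
  have hlen : (0 : ℕ) + 1 = (subT (PTree.leafX x : PTree X Ω)).length := rfl
  unfold ST
  rw [sum_fcons hlen]
  rw [sum_finset_fin_zero rfl]
  rw [sum_fcons hlen, sum_fcons hlen, sum_finset_fin_zero rfl, sum_finset_fin_zero rfl]
  have hget : ∀ i : Fin (subT (PTree.leafX x : PTree X Ω)).length,
      (subT (PTree.leafX x : PTree X Ω)).get i = PTree.leafX x := by
    rintro ⟨iv, hiv⟩
    have h0 : iv = 0 := Nat.lt_one_iff.mp hiv
    subst h0
    rfl
  have hrest : ∀ b : Bool, restT (prSet (fcons hlen b (∅ : Finset (Fin 0))))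
      (PTree.leafX x : PTree X Ω) 0 = if b then [PTree.leafX x] else [] := by
    intro b
    show (if prSet (fcons hlen b (∅ : Finset (Fin 0))) 0 then [PTree.leafX x]
      else []) = _
    rw [prSet_fcons_zero hlen]
  simp only [hrest, fcons_univ hlen, fcons_inter, fcons_card, hget, rootDec, Sum.isLeft_inl,
    forall_inter]
  simp only [Finset.empty_inter, Finset.card_empty, Bool.and_self, Bool.and_false,
    Bool.false_and, if_true, if_false, implies_true, Finset.notMem_empty, or_self,
    false_or, or_false, true_and, and_true, Bool.false_eq_true, IsEmpty.forall_iff,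
    zero_add, pow_one, pow_zero, one_smul, ite_true, ite_false, true_or, or_true]
  simp [leafF, FreeMonoid.ofList_singleton,
    show FreeMonoid.ofList ([] : List (PTree X Ω)) = 1 from rfl, ofF_one]
  abel

lemma ST_node (lam : k) (ω : Ω) (ss : List (PTree X Ω)) :
    ST k lam (.node ω ss)
      = (TensorProduct.map (Bplus k ω) LinearMap.id
         + TensorProduct.map LinearMap.id (Bplus k ω) :
         (RAlg k X Ω ⊗[k] RAlg k X Ω) →ₗ[k] (RAlg k X Ω ⊗[k] RAlg k X Ω))
        (SF k lam ss) := by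
  have hlen : (subF ss).length + 1 = (subT (PTree.node ω ss : PTree X Ω)).length := by
    rw [subT_node, List.length_cons]
  unfold ST SF
  rw [map_sum, sum_fcons hlen]
  refine Finset.sum_congr rfl fun I _ => ?_
  rw [map_sum, sum_fcons hlen, sum_fcons hlen, ← Finset.sum_add_distrib]
  refine Finset.sum_congr rfl fun J _ => ?_
  -- push the linear map inside on the right
  rw [apply_ite (fun z : RAlg k X Ω ⊗[k] RAlg k X Ω =>
    (TensorProduct.map (Bplus k ω) LinearMap.id
      + TensorProduct.map LinearMap.id (Bplus k ω) :
      (RAlg k X Ω ⊗[k] RAlg k X Ω) →ₗ[k] (RAlg k X Ω ⊗[k] RAlg k X Ω)) z), map_zero, map_smul]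
  rw [LinearMap.add_apply, TensorProduct.map_tmul, TensorProduct.map_tmul,
    LinearMap.id_apply, LinearMap.id_apply, Bplus_ofF, Bplus_ofF, ite_smul_add]
  have hget0 : ∀ hh, (subT (PTree.node ω ss : PTree X Ω)).get ⟨0, hh⟩ = PTree.node ω ss :=
    fun hh => rfl
  have hgetS : ∀ (i : Fin (subF ss).length) hh,
      (subT (PTree.node ω ss : PTree X Ω)).get ⟨(i : ℕ) + 1, hh⟩ = (subF ss).get i :=
    fun i hh => rfl
  simp only [restT_fcons ω ss hlen, fcons_univ hlen, forall_inter, fcons_inter,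
    forall_mem_fcons, fcons_card, hget0, hgetS, rootDec, Sum.isLeft_inr, Finset.mem_inter,
    Bool.and_eq_true, Bool.and_true, Bool.and_false, Bool.and_self, Bool.false_eq_true,
    Bool.true_eq_false, and_imp, if_true, if_false, eq_self_iff_true, true_and, and_true,
    true_or, or_true, false_or, or_false, false_and, and_false, implies_true, false_implies,
    ite_true, ite_false, add_zero, zero_add, Nat.add_zero, true_implies,
    graft_ofList]

end Aux4


section Main

mutual
theorem mainT (lam : k) (t : PTree X Ω) : DeltaT k lam t = ST k lam t := by
  cases t with
  | leafX x =>
      rw [ST_leaf]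
      simp only [DeltaT]
  | node ω ss =>
      have h1 : (ss.attach.map fun t => DeltaT k lam t.1) = ss.map (DeltaT k lam) := by
        rw [List.attach_map_val]
      have h2 : (ss.map (DeltaT k lam)).prod = SF k lam ss := mainF lam ss
      simp only [DeltaT]
      rw [h1, h2, ST_node]

theorem mainF (lam : k) (ts : List (PTree X Ω)) :
    (ts.map (DeltaT k lam)).prod = SF k lam ts := by
  cases ts with
  | nil => rw [List.map_nil, List.prod_nil, SF_nil]
  | cons t ts' => rw [List.map_cons, List.prod_cons, mainT lam t, mainF lam ts', SF_cons]
end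

lemma Delta_ofF (lam : k) (F : RForest X Ω) :
    Delta k lam (ofF k F) = DeltaF k lam F := by
  unfold Delta ofF
  rw [MonoidAlgebra.of_apply]
  rw [LinearMap.comp_apply, LinearEquiv.coe_coe, MonoidAlgebra.coeffLinearEquiv_apply,
    MonoidAlgebra.coeff_single]
  erw [Finsupp.lsum_single]
  exact LinearMap.toSpanSingleton_apply_one k _ (DeltaF k lam F)

lemma Delta_eq_sum (lam : k) (F : RForest X Ω) :
    Delta k lam (ofF k F) =
      ∑ I : Finset (Fin (numV F)), ∑ J : Finset (Fin (numV F)),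
        if I ∪ J = Finset.univ ∧ I ∩ J ⊆ VXset F then
          lam ^ (I ∩ J).card • (ofF k (indSub F I) ⊗ₜ[k] ofF k (indSub F J))
        else 0 := by
  rw [Delta_ofF]
  have h2 : DeltaF k lam F = SF k lam (FreeMonoid.toList F) := mainF k lam (FreeMonoid.toList F)
  rw [h2]
  unfold SF
  apply Finset.sum_congr rfl
  intro I _
  apply Finset.sum_congr rfl
  intro J _
  refine if_congr ?_ rfl rfl
  rw [Finset.eq_univ_iff_forall]
  constructor
  · rintro ⟨h1, h2⟩
    exact ⟨fun x => Finset.mem_union.mpr (h1 x), fun x hx => Finset.mem_filter.mpr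
      ⟨Finset.mem_univ _, h2 x (Finset.mem_inter.mp hx).1 (Finset.mem_inter.mp hx).2⟩⟩
  · rintro ⟨h1, h2⟩
    exact ⟨fun x => Finset.mem_union.mp (h1 x), fun x hxI hxJ =>
      (Finset.mem_filter.mp (h2 (Finset.mem_inter.mpr ⟨hxI, hxJ⟩))).2⟩

end Main

/-- Combinatorial description of the coproduct:
`Δ_λ(F) = Σ_{I ∪ J = V(F), I ∩ J ⊆ V_X(F)} λ^{|I∩J|} F_I ⊗ F_J`, and in
particular `Δ₀(F) = Σ_{I ⊆ V(F)} F_I ⊗ F_{V(F)∖I}`. -/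
theorem Delta_combinatorial [Nonempty Ω] (lam : k) (F : RForest X Ω) :
    (Delta k lam (ofF k F) =
      ∑ I : Finset (Fin (numV F)), ∑ J : Finset (Fin (numV F)),
        if I ∪ J = Finset.univ ∧ I ∩ J ⊆ VXset F then
          lam ^ (I ∩ J).card • (ofF k (indSub F I) ⊗ₜ[k] ofF k (indSub F J))
        else 0) ∧
    (Delta k (0 : k) (ofF k F) =
      ∑ I : Finset (Fin (numV F)), ofF k (indSub F I) ⊗ₜ[k] ofF k (indSub F Iᶜ)) := by
  constructor
  · exact Delta_eq_sum k lam F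
  · rw [Delta_eq_sum k 0 F]
    apply Finset.sum_congr rfl
    intro I _
    rw [Finset.sum_eq_single Iᶜ]
    · rw [if_pos ⟨Finset.union_compl I, by
        rw [Finset.inter_compl]; exact Finset.empty_subset _⟩]
      rw [Finset.inter_compl, Finset.card_empty, pow_zero, one_smul]
    · intro J _ hJ
      split
      · next hc =>
          obtain ⟨hu, _⟩ := hc
          have hsub : Iᶜ ⊆ J := by
            intro j hj
            rcases Finset.mem_union.mp
                (show j ∈ I ∪ J by rw [hu]; exact Finset.mem_univ j) with h | h
            · exact absurd h (Finset.mem_compl.mp hj)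
            · exact h
          have hne : (I ∩ J).Nonempty := by
            by_contra hempty
            apply hJ
            refine Finset.Subset.antisymm ?_ hsub
            intro j hj
            rw [Finset.mem_compl]
            intro hjI
            exact hempty ⟨j, Finset.mem_inter.mpr ⟨hjI, hj⟩⟩
          rw [zero_pow (Finset.card_pos.mpr hne).ne', zero_smul]
      · rfl
    · intro h
      exact absurd (Finset.mem_univ Iᶜ) h

end Moerdijk
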